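/- For real q with 0 < q < 1, the limit as q tends to 1 from below of (1-q)^4 times the sum over n ≥ 0 of q^{2n}(1+4q^{2n+1}+q^{4n+2})/(1-q^{2n+1})^4 equals π⁴/16. -/

import Mathlib

open Real Filter Set

noncomputable def Ssum (q : ℝ) (n : ℕ) : ℝ := ∑ j ∈ Finset.range (2*n+1), q^j

lemma one_sub_pow_eq (q : ℝ) (n : ℕ) : 1 - q^(2*n+1) = (1-q) * Ssum q n := by
  have := geom_sum_mul q (2*n+1)
  unfold Ssum
  nlinarith [this]

lemma Ssum_pos {q : ℝ} (hq : 0 < q) (n : ℕ) : 0 < Ssum q n :=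
  Finset.sum_pos (fun j _ => pow_pos hq j) ⟨0, by simp⟩

lemma key_eq {q : ℝ} (hq0 : 0 < q) (hq1 : q < 1) (n : ℕ) :
    (1-q)^4 * (q^(2*n) * (1 + 4*q^(2*n+1) + q^(4*n+2)) / (1 - q^(2*n+1))^4)
    = q^(2*n) * (1 + 4*q^(2*n+1) + q^(4*n+2)) / (Ssum q n)^4 := by
  rw [one_sub_pow_eq, mul_pow]
  have h1 : (1-q) ≠ 0 := by intro h; linarith [sub_eq_zero.mp h]
  have h2 : (Ssum q n) ≠ 0 := ne_of_gt (Ssum_pos hq0 n)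
  field_simp

lemma hasSum_odd4 : HasSum (fun n : ℕ => (6:ℝ) / (2*(n:ℝ)+1)^4) (π^4/16) := by
  have h4 : HasSum (fun n : ℕ => (1:ℝ) / (n:ℝ)^4) (π^4/90) := hasSum_zeta_four
  have heven : HasSum (fun k : ℕ => (1:ℝ) / ((2*k : ℕ):ℝ)^4) (π^4/1440) := by
    have h := h4.mul_left (1/16)
    have hfun : (fun k : ℕ => (1:ℝ) / ((2*k : ℕ):ℝ)^4) = fun k : ℕ => 1/16 * ((1:ℝ)/(k:ℝ)^4) := by
      funext k
      rcases Nat.eq_zero_or_pos k with rfl | hk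
      · simp
      · have hk' : ((k:ℝ))^4 ≠ 0 := by positivity
        push_cast
        field_simp
        ring
    rw [hfun]
    convert h using 1
    · rfl
    ring
  have hodd_summable : Summable (fun k : ℕ => (1:ℝ) / ((2*k+1 : ℕ):ℝ)^4) :=
    h4.summable.comp_injective (fun a b h => by omega)
  obtain ⟨T, hT⟩ := hodd_summable
  have htot : HasSum (fun n : ℕ => (1:ℝ) / (n:ℝ)^4) (π^4/1440 + T) :=
    HasSum.even_add_odd heven hT
  have hTval : T = π^4/96 := by
    have := h4.unique htot
    linarith
  rw [hTval] at hT
  have h := hT.mul_left 6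
  have hfun : (fun n : ℕ => (6:ℝ) / (2*(n:ℝ)+1)^4) = fun k : ℕ => 6 * ((1:ℝ)/((2*k+1:ℕ):ℝ)^4) := by
    funext k; push_cast; ring
  rw [hfun]
  convert h using 1
  · rfl
  ring

lemma Ssum_ge {q : ℝ} (hq0 : 0 < q) (hq1 : q < 1) (n : ℕ) :
    (2*(n:ℝ)+1) * q^(2*n) ≤ Ssum q n := by
  have h : ∀ j ∈ Finset.range (2*n+1), q^(2*n) ≤ q^j := fun j hj =>
    pow_le_pow_of_le_one hq0.le hq1.le (by simpa using Nat.lt_succ_iff.mp (Finset.mem_range.mp hj))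
  have h2 := Finset.card_nsmul_le_sum (Finset.range (2*n+1)) (fun j => q^j) (q^(2*n)) h
  rw [Finset.card_range, nsmul_eq_mul] at h2
  unfold Ssum
  push_cast at h2
  linarith

set_option maxHeartbeats 1000000 in
lemma bound_le {q : ℝ} (hq0 : 0 < q) (hq1 : q < 1) (n : ℕ) :
    q^(2*n) * (1 + 4*q^(2*n+1) + q^(4*n+2)) / (Ssum q n)^4 ≤ 124416 / (2*(n:ℝ)+1)^4 := by
  have hm : (0:ℝ) < 2*(n:ℝ)+1 := by positivity
  have hS : 0 < Ssum q n := Ssum_pos hq0 n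
  have p1 : 0 < q^(2*n) := pow_pos hq0 _
  have hq2n1 : q^(2*n+1) ≤ 1 := pow_le_one₀ hq0.le hq1.le
  have hq4n1 : q^(4*n+2) ≤ 1 := pow_le_one₀ hq0.le hq1.le
  have hq2n : q^(2*n) ≤ 1 := pow_le_one₀ hq0.le hq1.le
  have hNle : 1 + 4*q^(2*n+1) + q^(4*n+2) ≤ 6 := by linarith
  have hNpos : 0 < 1 + 4*q^(2*n+1) + q^(4*n+2) := by positivity
  have hnum : q^(2*n) * (1 + 4*q^(2*n+1) + q^(4*n+2)) ≤ 6 := by nlinarith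
  have hnum_pos : 0 < q^(2*n) * (1 + 4*q^(2*n+1) + q^(4*n+2)) := by positivity
  rcases le_or_gt (1/2 : ℝ) (q^(2*n+1)) with hx | hx
  · -- case A
    have h1 : q^(2*n+1) ≤ q^(2*n) := pow_le_pow_of_le_one hq0.le hq1.le (by omega)
    have h2 : (2*(n:ℝ)+1)/2 ≤ Ssum q n := by nlinarith [Ssum_ge hq0 hq1 n]
    have h3 : ((2*(n:ℝ)+1)/2)^4 ≤ (Ssum q n)^4 := pow_le_pow_left₀ (by positivity) h2 4
    calc q^(2*n) * (1 + 4*q^(2*n+1) + q^(4*n+2)) / (Ssum q n)^4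
        ≤ 6 / ((2*(n:ℝ)+1)/2)^4 := div_le_div₀ (by norm_num) hnum (by positivity) h3
      _ = 96 / (2*(n:ℝ)+1)^4 := by rw [div_pow]; field_simp; ring
      _ ≤ 124416 / (2*(n:ℝ)+1)^4 := by gcongr <;> norm_num
  · -- case B
    rcases Nat.eq_zero_or_pos n with rfl | hn
    · have hSone : Ssum q 0 = 1 := by simp [Ssum]
      rw [hSone]
      norm_num
      nlinarith
    · have hn1 : (1:ℝ) ≤ (n:ℝ) := by exact_mod_cast hn
      set s : ℝ := 1 - q with hs_def
      have hs : 0 < s := by simp [hs_def]; linarith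
      have hSe : s * Ssum q n = 1 - q^(2*n+1) := (one_sub_pow_eq q n).symm
      have hhalf : (1:ℝ)/2 < 1 - q^(2*n+1) := by linarith
      have hSlow : 1/(2*s) ≤ Ssum q n := by
        rw [div_le_iff₀ (by positivity)]
        nlinarith
      have hS4 : (1/(2*s))^4 ≤ (Ssum q n)^4 := pow_le_pow_left₀ (by positivity) hSlow 4
      have step1 : q^(2*n) * (1 + 4*q^(2*n+1) + q^(4*n+2)) / (Ssum q n)^4
          ≤ 96 * q^(2*n) * s^4 := by
        have h6 : q^(2*n) * (1 + 4*q^(2*n+1) + q^(4*n+2)) ≤ 6 * q^(2*n) := by nlinarith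
        calc q^(2*n) * (1 + 4*q^(2*n+1) + q^(4*n+2)) / (Ssum q n)^4
            ≤ (6 * q^(2*n)) / (1/(2*s))^4 :=
              div_le_div₀ (by positivity) h6 (by positivity) hS4
          _ = 96 * q^(2*n) * s^4 := by
              rw [div_pow]
              field_simp
              ring
      -- key exponential estimate
      obtain ⟨y, hy_def⟩ : ∃ y : ℝ, y = (2*(n:ℝ)+1) * s := ⟨_, rfl⟩
      have hy : 0 ≤ y := by rw [hy_def]; positivity
      have hqexp : q ≤ exp (q - 1) := by linarith [Real.add_one_le_exp (q-1)]
      have hq2nexp : q^(2*n) ≤ exp (-(2/3)*y) := by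
        calc q^(2*n) ≤ (exp (q-1))^(2*n) := pow_le_pow_left₀ hq0.le hqexp (2*n)
          _ = exp ((2*(n:ℝ)) * (q-1)) := by
              rw [← Real.exp_nat_mul]; congr 1; push_cast; ring
          _ ≤ exp (-(2/3)*y) := by
              apply Real.exp_le_exp.mpr
              rw [hy_def, hs_def]
              nlinarith
      have hy4 : y^4 ≤ 1296 * exp ((2/3)*y) := by
        have h7 : y/6 + 1 ≤ exp (y/6) := Real.add_one_le_exp (y/6)
        have h8 : (y/6)^4 ≤ (exp (y/6))^4 := pow_le_pow_left₀ (by positivity) (by linarith) 4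
        have h9 : (exp (y/6))^4 = exp ((2/3)*y) := by
          rw [← Real.exp_nat_mul]; congr 1; push_cast; ring
        nlinarith [h8, h9]
      have key : y^4 * q^(2*n) ≤ 1296 := by
        calc y^4 * q^(2*n) ≤ (1296 * exp ((2/3)*y)) * exp (-(2/3)*y) := by
              apply mul_le_mul hy4 hq2nexp (by positivity) (by positivity)
          _ = 1296 := by
              have hee : (2/3)*y + -(2/3)*y = 0 := by ring
              rw [mul_assoc, ← Real.exp_add, hee, Real.exp_zero, mul_one]
      have final : 96 * q^(2*n) * s^4 ≤ 124416 / (2*(n:ℝ)+1)^4 := by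
        rw [le_div_iff₀ (by positivity)]
        have hyy : y^4 = (2*(n:ℝ)+1)^4 * s^4 := by rw [hy_def]; ring
        have h10 : 96 * q^(2*n) * s^4 * (2*(n:ℝ)+1)^4 = 96 * (y^4 * q^(2*n)) := by
          rw [hyy]; ring
        rw [h10]
        linarith [key]
      linarith [step1, final]

theorem sun_zeta4 :
    Tendsto (fun q : ℝ => (1 - q) ^ 4 *
        ∑' n : ℕ, q ^ (2 * n) * (1 + 4 * q ^ (2 * n + 1) + q ^ (4 * n + 2)) /
          (1 - q ^ (2 * n + 1)) ^ 4)
      (nhdsWithin 1 (Ioo (0 : ℝ) 1)) (nhds (π ^ 4 / 16)) := by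
  have hodd := hasSum_odd4
  have hsum_bound : Summable (fun n : ℕ => (124416:ℝ) / (2*(n:ℝ)+1)^4) := by
    have h := hodd.summable.mul_left 20736
    have hfun : (fun n : ℕ => (124416:ℝ) / (2*(n:ℝ)+1)^4)
        = fun n : ℕ => 20736 * ((6:ℝ) / (2*(n:ℝ)+1)^4) := by
      funext n; ring
    rw [hfun]; exact h
  have hmain : Tendsto (fun q : ℝ => ∑' n : ℕ,
      (1-q)^4 * (q^(2*n) * (1 + 4*q^(2*n+1) + q^(4*n+2)) / (1 - q^(2*n+1))^4))
      (nhdsWithin 1 (Ioo (0:ℝ) 1)) (nhds (∑' n : ℕ, (6:ℝ) / (2*(n:ℝ)+1)^4)) := by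
    apply tendsto_tsum_of_dominated_convergence hsum_bound
    · intro n
      have hden : Tendsto (fun q : ℝ => (Ssum q n)^4) (nhds 1) (nhds ((2*(n:ℝ)+1)^4)) := by
        apply Tendsto.pow
        have hc : Continuous fun q : ℝ => Ssum q n := by unfold Ssum; continuity
        have h := hc.tendsto 1
        have he : Ssum 1 n = 2*(n:ℝ)+1 := by simp [Ssum]
        rwa [he] at h
      have hnum : Tendsto (fun q : ℝ => q^(2*n)*(1+4*q^(2*n+1)+q^(4*n+2))) (nhds 1)
          (nhds 6) := by
        have hc : Continuous fun q : ℝ => q^(2*n)*(1+4*q^(2*n+1)+q^(4*n+2)) := by continuity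
        have h := hc.tendsto 1
        norm_num at h
        exact h
      have hcont := (hnum.div hden (by positivity)).mono_left
        (nhdsWithin_le_nhds (s := Ioo (0:ℝ) 1))
      apply Tendsto.congr' _ hcont
      filter_upwards [self_mem_nhdsWithin] with q hq
      exact (key_eq hq.1 hq.2 n).symm
    · filter_upwards [self_mem_nhdsWithin] with q hq n
      have h1 : (0:ℝ) ≤ q^(2*n) := pow_nonneg hq.1.le _
      have h2 : (0:ℝ) ≤ q^(2*n+1) := pow_nonneg hq.1.le _
      have h3 : (0:ℝ) ≤ q^(4*n+2) := pow_nonneg hq.1.le _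
      have h4 : (0:ℝ) ≤ (Ssum q n)^4 := by positivity
      have hnn : (0:ℝ) ≤ q^(2*n) * (1 + 4*q^(2*n+1) + q^(4*n+2)) / (Ssum q n)^4 :=
        div_nonneg (mul_nonneg h1 (by linarith)) h4
      rw [Real.norm_eq_abs, key_eq hq.1 hq.2 n, abs_of_nonneg hnn]
      exact bound_le hq.1 hq.2 n
  rw [hodd.tsum_eq] at hmain
  apply hmain.congr
  intro q
  exact tsum_mul_left
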